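/- Let S be a finite set of points in ℝ^d, X ∈ S, and Y ∈ S a point of S farthest from X. Suppose every point of S is within distance 1 of some line ℓ (i.e., S is contained in the infinite cylinder of radius 1 around ℓ). Then every point of S is within distance 4 of the line ℓ₀ through X and Y. -/

import Mathlib

private lemma mincyn_num (A B s K : ℝ) (hA0 : 0 ≤ A) (hA : A ≤ 2) (hB0 : 0 ≤ B) (hB : B ≤ 2)
    (hs : 0 ≤ s) (hK : 12 ≤ K) (h1 : s^2*K ≤ K + A^2 - B^2) : B + s*A ≤ 4 := by
  have t1 : 0 ≤ (K-12)*((4-B)^2 - A^2) := mul_nonneg (by linarith) (by nlinarith)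
  have t2 : 0 ≤ (4-A^2)*(4+A^2-B^2) := mul_nonneg (by nlinarith) (by nlinarith)
  have key : (K + A^2 - B^2) * A^2 ≤ (4-B)^2 * K := by nlinarith [sq_nonneg (B-2)]
  have hKpos : (0:ℝ) < K := by linarith
  have h2 : (s*A)^2 ≤ (4-B)^2 := by
    nlinarith [sq_nonneg A, mul_nonneg (mul_nonneg (sq_nonneg s) hKpos.le) (sq_nonneg A)]
  have h3 : s*A ≤ 4 - B := by nlinarith [mul_nonneg hs hA0]
  linarith

theorem mincyn_init (d : ℕ) (S : Finset (EuclideanSpace ℝ (Fin d)))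
    (X Y : EuclideanSpace ℝ (Fin d)) (hX : X ∈ S) (hY : Y ∈ S)
    (hfar : ∀ Z ∈ S, dist X Z ≤ dist X Y) (hXY : X ≠ Y)
    (a u : EuclideanSpace ℝ (Fin d))
    (hcyl : ∀ Z ∈ S, Metric.infDist Z (Set.range fun t : ℝ => a + t • u) ≤ 1) :
    ∀ Z ∈ S, Metric.infDist Z (Set.range fun t : ℝ => X + t • (Y - X)) ≤ 4 := by
  intro Z hZ
  by_cases h4 : dist X Y ≤ 4
  · calc Metric.infDist Z (Set.range fun t : ℝ => X + t • (Y - X))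
        ≤ dist Z X := Metric.infDist_le_dist_of_mem ⟨0, by simp⟩
      _ = dist X Z := dist_comm _ _
      _ ≤ dist X Y := hfar Z hZ
      _ ≤ 4 := h4
  push_neg at h4
  have hu : u ≠ 0 := by
    rintro rfl
    have hX1 : dist X a ≤ 1 := by simpa [Metric.infDist_singleton] using hcyl X hX
    have hY1 : dist Y a ≤ 1 := by simpa [Metric.infDist_singleton] using hcyl Y hY
    have : dist X Y ≤ 2 := by
      calc dist X Y ≤ dist X a + dist a Y := dist_triangle _ _ _
        _ ≤ 1 + 1 := by rw [dist_comm a Y]; linarith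
        _ = 2 := by norm_num
    linarith
  have hu2 : (0:ℝ) < ‖u‖^2 := pow_pos (norm_pos_iff.mpr hu) 2
  have hclosed : IsClosed (Set.range fun t : ℝ => a + t • u) := by
    have he : (Set.range fun t : ℝ => a + t • u)
        = (fun x => a + x) '' ((Submodule.span ℝ {u} : Submodule ℝ _) : Set _) := by
      ext x
      simp only [Set.mem_image, Set.mem_range, SetLike.mem_coe, Submodule.mem_span_singleton]
      constructor
      · rintro ⟨t, rfl⟩; exact ⟨t • u, ⟨t, rfl⟩, rfl⟩
      · rintro ⟨y, ⟨t, rfl⟩, rfl⟩; exact ⟨t, rfl⟩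
    rw [he, show (fun x => a + x) = ⇑(Homeomorph.addLeft a) from rfl,
      Homeomorph.isClosed_image]
    exact Submodule.closed_of_finiteDimensional _
  have hdecomp : ∀ P ∈ S, ∃ (t : ℝ) (e : EuclideanSpace ℝ (Fin d)),
      P = a + t • u + e ∧ inner ℝ e u = (0:ℝ) ∧ ‖e‖ ≤ 1 := by
    intro P hP
    obtain ⟨y, ⟨t, rfl⟩, hdy⟩ :=
      hclosed.exists_infDist_eq_dist ⟨a + (0:ℝ) • u, 0, rfl⟩ P
    have hd1 : ‖P - (a + t • u)‖ ≤ 1 := by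
      rw [← dist_eq_norm, ← hdy]; exact hcyl P hP
    set e0 := P - (a + t • u) with he0
    set c0 : ℝ := inner ℝ e0 u / ‖u‖^2 with hc0
    have hinner : inner ℝ (e0 - c0 • u) u = (0:ℝ) := by
      rw [inner_sub_left, real_inner_smul_left, real_inner_self_eq_norm_sq, hc0]
      field_simp
      simp
    refine ⟨t + c0, e0 - c0 • u, ?_, hinner, ?_⟩
    · have : P = a + t • u + e0 := by rw [he0]; abel
      rw [this, add_smul]; abel
    · have horth : inner ℝ (e0 - c0 • u) (c0 • u) = (0:ℝ) := by
        rw [real_inner_smul_right, hinner, mul_zero]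
      have hpyth : ‖e0‖ * ‖e0‖ = ‖e0 - c0 • u‖ * ‖e0 - c0 • u‖ + ‖c0 • u‖ * ‖c0 • u‖ := by
        have := norm_add_sq_eq_norm_sq_add_norm_sq_of_inner_eq_zero
          (e0 - c0 • u) (c0 • u) horth
        rwa [sub_add_cancel] at this
      nlinarith [norm_nonneg (e0 - c0 • u), norm_nonneg (c0 • u), norm_nonneg e0]
  obtain ⟨p, ex, hXd, hex0, hex1⟩ := hdecomp X hX
  obtain ⟨q, ey, hYd, hey0, hey1⟩ := hdecomp Y hY
  obtain ⟨r, ez, hez_, hez0, hez1⟩ := hdecomp Z hZ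
  have hv : Y - X = (q - p) • u + (ey - ex) := by rw [hXd, hYd, sub_smul]; abel
  have hw : Z - X = (r - p) • u + (ez - ex) := by rw [hXd, hez_, sub_smul]; abel
  have hXYn : 4 < ‖Y - X‖ := by rwa [← norm_sub_rev, ← dist_eq_norm]
  have hex0' : inner ℝ u ex = (0:ℝ) := by rw [real_inner_comm]; exact hex0
  have hey0' : inner ℝ u ey = (0:ℝ) := by rw [real_inner_comm]; exact hey0
  have hez0' : inner ℝ u ez = (0:ℝ) := by rw [real_inner_comm]; exact hez0
  have hovy : inner ℝ ((q - p) • u) (ey - ex) = (0:ℝ) := by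
    rw [real_inner_smul_left, inner_sub_right, hey0', hex0']
    ring
  have hovz : inner ℝ ((r - p) • u) (ez - ex) = (0:ℝ) := by
    rw [real_inner_smul_left, inner_sub_right, hez0', hex0']
    ring
  have hsmy : ‖(q - p) • u‖ * ‖(q - p) • u‖ = (q-p)^2 * ‖u‖^2 := by
    rw [norm_smul, Real.norm_eq_abs, mul_mul_mul_comm, ← sq, ← sq, sq_abs]
  have hsmz : ‖(r - p) • u‖ * ‖(r - p) • u‖ = (r-p)^2 * ‖u‖^2 := by
    rw [norm_smul, Real.norm_eq_abs, mul_mul_mul_comm, ← sq, ← sq, sq_abs]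
  have hnv : ‖Y - X‖ * ‖Y - X‖ = (q-p)^2 * ‖u‖^2 + ‖ey - ex‖ * ‖ey - ex‖ := by
    rw [hv, norm_add_sq_eq_norm_sq_add_norm_sq_of_inner_eq_zero _ _ hovy, hsmy]
  have hnw : ‖Z - X‖ * ‖Z - X‖ = (r-p)^2 * ‖u‖^2 + ‖ez - ex‖ * ‖ez - ex‖ := by
    rw [hw, norm_add_sq_eq_norm_sq_add_norm_sq_of_inner_eq_zero _ _ hovz, hsmz]
  have hZXle : ‖Z - X‖ ≤ ‖Y - X‖ := by
    have h := hfar Z hZ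
    rw [dist_eq_norm, dist_eq_norm] at h
    rwa [norm_sub_rev X Z, norm_sub_rev X Y] at h
  have hqp : q ≠ p := by
    intro h
    have : ‖Y - X‖ ≤ 2 := by
      rw [hv, h, sub_self, zero_smul, zero_add]
      calc ‖ey - ex‖ ≤ ‖ey‖ + ‖ex‖ := norm_sub_le _ _
        _ ≤ 2 := by linarith
    linarith
  have hqp' : q - p ≠ 0 := sub_ne_zero.mpr hqp
  set lam : ℝ := (r - p) / (q - p) with hlamdef
  have hl : lam * (q - p) = r - p := div_mul_cancel₀ _ hqp'
  have hkey : Z - (X + lam • (Y - X)) = (ez - ex) - lam • (ey - ex) := by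
    have h0 : Z - (X + lam • (Y - X)) = (Z - X) - lam • (Y - X) := by abel
    rw [h0, hv, hw, smul_add, smul_smul, hl]
    abel
  have hA2 : ‖ey - ex‖ ≤ 2 := le_trans (norm_sub_le _ _) (by linarith)
  have hB2 : ‖ez - ex‖ ≤ 2 := le_trans (norm_sub_le _ _) (by linarith)
  have hK12 : (12:ℝ) ≤ (q-p)^2 * ‖u‖^2 := by
    have h16 : 4*4 < ‖Y - X‖ * ‖Y - X‖ :=
      mul_lt_mul'' hXYn hXYn (by norm_num) (by norm_num)
    have hAA : ‖ey - ex‖ * ‖ey - ex‖ ≤ 2*2 :=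
      mul_le_mul hA2 hA2 (norm_nonneg _) (by norm_num)
    linarith [hnv]
  have hineq : |lam|^2 * ((q-p)^2 * ‖u‖^2) ≤ (q-p)^2 * ‖u‖^2 + ‖ey - ex‖^2 - ‖ez - ex‖^2 := by
    have h1 : |lam|^2 * (q-p)^2 = (r-p)^2 := by
      rw [sq_abs, hlamdef, div_pow]
      field_simp
    have h2 : (r-p)^2 * ‖u‖^2 + ‖ez - ex‖ * ‖ez - ex‖
        ≤ (q-p)^2 * ‖u‖^2 + ‖ey - ex‖ * ‖ey - ex‖ := by
      rw [← hnv, ← hnw]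
      exact mul_self_le_mul_self (norm_nonneg _) hZXle
    have h3 : |lam|^2 * ((q-p)^2 * ‖u‖^2) = (r-p)^2 * ‖u‖^2 := by
      rw [← mul_assoc, h1]
    have e1 : ‖ey - ex‖^2 = ‖ey - ex‖ * ‖ey - ex‖ := sq _
    have e2 : ‖ez - ex‖^2 = ‖ez - ex‖ * ‖ez - ex‖ := sq _
    linarith
  have hfinal : ‖ez - ex‖ + |lam| * ‖ey - ex‖ ≤ 4 :=
    mincyn_num _ _ _ _ (norm_nonneg _) hA2 (norm_nonneg _) hB2 (abs_nonneg _) hK12 hineq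
  calc Metric.infDist Z (Set.range fun t : ℝ => X + t • (Y - X))
      ≤ dist Z (X + lam • (Y - X)) := Metric.infDist_le_dist_of_mem ⟨lam, rfl⟩
    _ = ‖(ez - ex) - lam • (ey - ex)‖ := by rw [dist_eq_norm, hkey]
    _ ≤ ‖ez - ex‖ + ‖lam • (ey - ex)‖ := norm_sub_le _ _
    _ = ‖ez - ex‖ + |lam| * ‖ey - ex‖ := by rw [norm_smul, Real.norm_eq_abs]
    _ ≤ 4 := hfinal
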